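/- arXiv:1412.1181 — 2 statements merged into one kernel-verified Lean document; each statement's English description precedes it below -/
import Mathlib

section
/- Let R be an n×n symmetric positive-definite correlation matrix, ρ_i = (R_{1i},...,R_{i-1,i}), ρ_i^{*j} = (R_{1j},...,R_{i-1,j}) for j ≥ i, and c_i = 1 - ρ_i R_{i-1}^{-1} ρ_i^T. Then for all i ≥ 1 and j, l with j ≥ l ≥ i+1: ρ_{i+1}^{*j} R_i^{-1} (ρ_{i+1}^{*l})^T = ρ_i^{*j} R_{i-1}^{-1} (ρ_i^{*l})^T + (R_{ij} - ρ_i^{*j} R_{i-1}^{-1} ρ_i^T)(R_{il} - ρ_i^{*l} R_{i-1}^{-1} ρ_i^T)/c_i. -/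
open Matrix

/-- Leading `i × i` principal submatrix. -/
def lead {n : ℕ} (R : Matrix (Fin n) (Fin n) ℝ) (i : ℕ) (h : i ≤ n) :
    Matrix (Fin i) (Fin i) ℝ :=
  R.submatrix (Fin.castLE h) (Fin.castLE h)

/-- First `i` entries of column `j` of `R`. -/
def colv {n : ℕ} (R : Matrix (Fin n) (Fin n) ℝ) (i : ℕ) (h : i ≤ n) (j : Fin n) :
    Fin i → ℝ :=
  fun k => R (Fin.castLE h k) j

lemma posDef_submatrix' {N M : ℕ} {R : Matrix (Fin N) (Fin N) ℝ} (hR : R.PosDef)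
    (f : Fin M → Fin N) (hf : Function.Injective f) :
    (R.submatrix f f).PosDef := by
  refine Matrix.PosDef.of_dotProduct_mulVec_pos (hR.1.submatrix f) (fun x hx => ?_)
  set y : Fin N → ℝ := Function.extend f x 0 with hy
  have hyf : ∀ k, y (f k) = x k := fun k => hf.extend_apply x 0 k
  have hy0 : ∀ a, a ∉ Finset.image f Finset.univ → y a = 0 := by
    intro a ha
    rw [hy, Function.extend_apply']
    · rfl
    · rintro ⟨k, rfl⟩; exact ha (Finset.mem_image_of_mem f (Finset.mem_univ k))
  have hyne : y ≠ 0 := by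
    intro h
    apply hx; funext k
    have := congrFun h (f k)
    simpa [hyf k] using this
  have hinj : ∀ k ∈ Finset.univ, ∀ k' ∈ Finset.univ, f k = f k' → k = k' :=
    fun k _ k' _ h => hf h
  have inner : ∀ a, (R *ᵥ y) a = ∑ k, R a (f k) * x k := by
    intro a
    show ∑ b, R a b * y b = _
    rw [← Finset.sum_subset (Finset.subset_univ (Finset.image f Finset.univ))
      (fun b _ hb => by rw [hy0 b hb, mul_zero]),
      Finset.sum_image hinj]
    simp [hyf]
  have key : dotProduct (star x) (R.submatrix f f *ᵥ x) = dotProduct (star y) (R *ᵥ y) := by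
    simp only [star_trivial]
    rw [show R *ᵥ y = fun a => ∑ k, R a (f k) * x k from funext inner]
    show ∑ k, x k * _ = ∑ a, y a * _
    rw [← Finset.sum_subset (Finset.subset_univ (Finset.image f Finset.univ))
      (fun b _ hb => by rw [hy0 b hb, zero_mul]),
      Finset.sum_image hinj]
    simp [hyf, mulVec, dotProduct, submatrix]
  rw [key]
  exact hR.dotProduct_mulVec_pos hyne

lemma snoc_dot {m : ℕ} (a c : Fin m → ℝ) (b d : ℝ) :
    (Fin.snoc a b : Fin (m + 1) → ℝ) ⬝ᵥ (Fin.snoc c d : Fin (m + 1) → ℝ) = a ⬝ᵥ c + b * d := by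
  simp [dotProduct, Fin.sum_univ_castSucc]

/-- Recursive identity for the quadratic forms (Eq. (A.1) of the paper):
`ρ_{i+1}^{*j} R_i⁻¹ (ρ_{i+1}^{*l})ᵀ = ρ_i^{*j} R_{i−1}⁻¹ (ρ_i^{*l})ᵀ
  + (R_{ij} − ρ_i^{*j} R_{i−1}⁻¹ ρ_iᵀ)(R_{il} − ρ_i^{*l} R_{i−1}⁻¹ ρ_iᵀ)/c_i`.
Here `m = i − 1` is 0-indexed, columns `jf, lf` are 0-indexed (`j ≥ l ≥ i + 1`
becomes `jf ≥ lf ≥ m + 1`). -/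
theorem stmt3 {n : ℕ} (R : Matrix (Fin n) (Fin n) ℝ) (hR : R.PosDef)
    (hdiag : ∀ k, R k k = 1) (m : ℕ) (hm : m + 1 ≤ n) (jf lf : Fin n)
    (hl : m + 1 ≤ (lf : ℕ)) (hjl : (lf : ℕ) ≤ (jf : ℕ)) :
    colv R (m + 1) hm jf ⬝ᵥ (lead R (m + 1) hm)⁻¹ *ᵥ colv R (m + 1) hm lf =
      colv R m (Nat.le_of_succ_le hm) jf ⬝ᵥ
          (lead R m (Nat.le_of_succ_le hm))⁻¹ *ᵥ colv R m (Nat.le_of_succ_le hm) lf +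
        (R ⟨m, hm⟩ jf - colv R m (Nat.le_of_succ_le hm) jf ⬝ᵥ
            (lead R m (Nat.le_of_succ_le hm))⁻¹ *ᵥ
              colv R m (Nat.le_of_succ_le hm) ⟨m, hm⟩) *
          (R ⟨m, hm⟩ lf - colv R m (Nat.le_of_succ_le hm) lf ⬝ᵥ
              (lead R m (Nat.le_of_succ_le hm))⁻¹ *ᵥ
                colv R m (Nat.le_of_succ_le hm) ⟨m, hm⟩) /
          (1 - colv R m (Nat.le_of_succ_le hm) ⟨m, hm⟩ ⬝ᵥ
              (lead R m (Nat.le_of_succ_le hm))⁻¹ *ᵥ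
                colv R m (Nat.le_of_succ_le hm) ⟨m, hm⟩) := by
  have hm' : m ≤ n := Nat.le_of_succ_le hm
  have hsym : ∀ a b, R a b = R b a := fun a b => (congrFun (congrFun hR.1 a) b).symm
  set S : Matrix (Fin m) (Fin m) ℝ := lead R m (Nat.le_of_succ_le hm) with hS
  set A : Matrix (Fin (m + 1)) (Fin (m + 1)) ℝ := lead R (m + 1) hm with hA
  set u : Fin m → ℝ := colv R m (Nat.le_of_succ_le hm) ⟨m, hm⟩ with hu
  set vl : Fin m → ℝ := colv R m (Nat.le_of_succ_le hm) lf with hvl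
  set vj : Fin m → ℝ := colv R m (Nat.le_of_succ_le hm) jf with hvj
  have hSpd : S.PosDef := posDef_submatrix' hR _ (Fin.castLE_injective _)
  have hApd : A.PosDef := posDef_submatrix' hR _ (Fin.castLE_injective _)
  have hSdet : IsUnit S.det := isUnit_iff_ne_zero.2 hSpd.det_pos.ne'
  have hAdet : IsUnit A.det := isUnit_iff_ne_zero.2 hApd.det_pos.ne'
  set B : Matrix (Fin m) (Fin m) ℝ := S⁻¹ with hB
  have hSB : S * B = 1 := mul_nonsing_inv S hSdet
  have hBt : Bᵀ = B := by
    have := hSpd.1.inv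
    rw [hB, ← conjTranspose_eq_transpose_of_trivial]; exact this
  have swap : ∀ a b : Fin m → ℝ, a ⬝ᵥ B *ᵥ b = b ⬝ᵥ B *ᵥ a := by
    intro a b
    rw [dotProduct_mulVec, ← mulVec_transpose, hBt, dotProduct_comm]
  -- lead entries
  have hAcc : ∀ p q : Fin m, A p.castSucc q.castSucc = S p q := fun p q => rfl
  have hAcl : ∀ p : Fin m, A p.castSucc (Fin.last m) = u p := fun p => rfl
  have hAlc : ∀ q : Fin m, A (Fin.last m) q.castSucc = u q := fun q => hsym _ _
  have hAll : A (Fin.last m) (Fin.last m) = 1 := hdiag _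
  -- column decomposition
  have hcol : ∀ j : Fin n,
      colv R (m + 1) hm j = Fin.snoc (colv R m (Nat.le_of_succ_le hm) j) (R ⟨m, hm⟩ j) := by
    intro j; funext k
    refine Fin.lastCases ?_ (fun p => ?_) k
    · rw [Fin.snoc_last]; rfl
    · rw [Fin.snoc_castSucc]; rfl
  -- mulVec on snoc
  have hmv : ∀ (x : Fin m → ℝ) (t : ℝ),
      A *ᵥ (Fin.snoc x t : Fin (m + 1) → ℝ) = Fin.snoc (S *ᵥ x + t • u) (u ⬝ᵥ x + t) := by
    intro x t; funext k
    refine Fin.lastCases ?_ (fun p => ?_) k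
    · show ∑ q, A (Fin.last m) q * (Fin.snoc x t : Fin (m + 1) → ℝ) q = _
      rw [Fin.sum_univ_castSucc]
      simp only [Fin.snoc_castSucc, Fin.snoc_last, hAlc, hAll, one_mul]
      rfl
    · show ∑ q, A p.castSucc q * (Fin.snoc x t : Fin (m + 1) → ℝ) q = _
      rw [Fin.sum_univ_castSucc]
      simp only [Fin.snoc_castSucc, Fin.snoc_last, hAcc, hAcl,
        Pi.add_apply, Pi.smul_apply, smul_eq_mul]
      show _ = (S *ᵥ x) p + t * u p
      rw [mul_comm (u p) t]; rfl
  -- positivity of c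
  set c : ℝ := 1 - u ⬝ᵥ B *ᵥ u with hc
  have hcpos : 0 < c := by
    have hw : (Fin.snoc (-(B *ᵥ u)) 1 : Fin (m + 1) → ℝ) ≠ 0 := by
      intro h
      have := congrFun h (Fin.last m)
      simp [Fin.snoc_last] at this
    have := hApd.dotProduct_mulVec_pos hw
    have hAw : A *ᵥ (Fin.snoc (-(B *ᵥ u)) 1 : Fin (m + 1) → ℝ) =
        Fin.snoc (0 : Fin m → ℝ) c := by
      have h1 : S *ᵥ (-(B *ᵥ u)) + (1 : ℝ) • u = 0 := by
        rw [mulVec_neg, mulVec_mulVec, hSB, one_mulVec, one_smul, neg_add_cancel]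
      have h2 : u ⬝ᵥ (-(B *ᵥ u)) + 1 = c := by
        rw [dotProduct_neg, hc]; ring
      rw [hmv, h1, h2]
    rw [hAw, star_trivial, snoc_dot] at this
    simpa using this
  have hcne : c ≠ 0 := hcpos.ne'
  set s : ℝ := (R ⟨m, hm⟩ lf - vl ⬝ᵥ B *ᵥ u) / c with hs
  -- solve the system
  have hAx : A *ᵥ (Fin.snoc (B *ᵥ vl - s • (B *ᵥ u)) s : Fin (m + 1) → ℝ) =
      colv R (m + 1) hm lf := by
    have hSBu : S *ᵥ (B *ᵥ u) = u := by rw [mulVec_mulVec, hSB, one_mulVec]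
    have hSBvl : S *ᵥ (B *ᵥ vl) = vl := by rw [mulVec_mulVec, hSB, one_mulVec]
    have h1 : S *ᵥ (B *ᵥ vl - s • (B *ᵥ u)) + s • u = vl := by
      rw [mulVec_sub, mulVec_smul, hSBu, hSBvl, sub_add_cancel]
    have h2 : u ⬝ᵥ (B *ᵥ vl - s • (B *ᵥ u)) + s = R ⟨m, hm⟩ lf := by
      rw [dotProduct_sub, dotProduct_smul, smul_eq_mul, swap u vl]
      have hsc : s * c = R ⟨m, hm⟩ lf - vl ⬝ᵥ B *ᵥ u := div_mul_cancel₀ _ hcne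
      linear_combination hsc - s * hc
    rw [hmv, h1, h2, hcol lf]
  have hAinv : (A)⁻¹ *ᵥ colv R (m + 1) hm lf =
      (Fin.snoc (B *ᵥ vl - s • (B *ᵥ u)) s : Fin (m + 1) → ℝ) := by
    rw [← hAx, mulVec_mulVec, nonsing_inv_mul A hAdet, one_mulVec]
  rw [hAinv, hcol jf, snoc_dot, dotProduct_sub, dotProduct_smul, smul_eq_mul,
    mul_div_assoc, ← hs]
  ring
end

section
/- Define the semi-partial correlation coefficients ρ_{ij(1,...,i-1)} = (R_{ij} - ρ_i^{*j} R_{i-1}^{-1} ρ_i^T)/sqrt(1 - ρ_i R_{i-1}^{-1} ρ_i^T) for j ≥ i. Then for all i ≥ 1 and j ≥ i+1: ρ_{i+1}^{*j} R_i^{-1} ρ_{i+1}^T = Σ_{k=1}^{i} ρ_{k,i+1(1,...,k-1)} · ρ_{kj(1,...,k-1)}. -/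
open Matrix

variable {n : ℕ} {R : Matrix (Fin n) (Fin n) ℝ}

lemma sum_restrict {i : ℕ} (h : i ≤ n) (f : Fin n → ℝ)
    (hf : ∀ a : Fin n, ¬ ((a : ℕ) < i) → f a = 0) :
    ∑ a : Fin n, f a = ∑ a : Fin i, f (Fin.castLE h a) := by
  have hm := Finset.sum_map Finset.univ (Fin.castLEEmb h) f
  simp only [Fin.castLEEmb_apply] at hm
  rw [← hm]
  refine (Finset.sum_subset (Finset.subset_univ _) ?_).symm
  intro a _ ha
  refine hf a fun hai => ha ?_
  simp only [Finset.mem_map, Finset.mem_univ, true_and, Fin.castLEEmb_apply]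
  exact ⟨⟨a, hai⟩, Fin.ext rfl⟩

lemma lead_posDef (hR : R.PosDef) (i : ℕ) (h : i ≤ n) : (lead R i h).PosDef := by
  refine Matrix.posDef_iff_dotProduct_mulVec.mpr ⟨?_, ?_⟩
  · have h1 := hR.1
    ext a b
    have := congrFun (congrFun h1 (Fin.castLE h b)) (Fin.castLE h a)
    simpa [lead, conjTranspose_apply] using this.symm
  · intro x hx
    set y : Fin n → ℝ := fun j => if hj : (j : ℕ) < i then x ⟨j, hj⟩ else 0 with hy_def
    have hy : y ≠ 0 := by
      intro hy0
      apply hx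
      funext a
      have := congrFun hy0 (Fin.castLE h a)
      simpa [hy_def, a.isLt] using this
    have hpos := hR.dotProduct_mulVec_pos hy
    have key : dotProduct (star y) (R *ᵥ y) = dotProduct (star x) ((lead R i h) *ᵥ x) := by
      simp only [star_trivial, dotProduct, mulVec, lead, submatrix_apply]
      rw [sum_restrict h _ (fun a ha => by simp [hy_def, dif_neg ha])]
      refine Finset.sum_congr rfl fun a _ => ?_
      have hya : y (Fin.castLE h a) = x a := by
        simp only [hy_def]
        rw [dif_pos (by simpa using a.isLt)]
        exact congrArg x (Fin.ext rfl)
      rw [hya]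
      congr 1
      rw [sum_restrict h _ (fun b hb => by simp [hy_def, dif_neg hb])]
      refine Finset.sum_congr rfl fun b _ => ?_
      have : y (Fin.castLE h b) = x b := by
        simp only [hy_def]
        rw [dif_pos (by simpa using b.isLt)]
        exact congrArg x (Fin.ext rfl)
      rw [this]
    rw [key] at hpos
    exact hpos

/-- explicit inverse of the bordered matrix -/
noncomputable def Nmat {i : ℕ} (Ai : Matrix (Fin i) (Fin i) ℝ) (u : Fin i → ℝ) (s : ℝ) :
    Matrix (Fin (i+1)) (Fin (i+1)) ℝ :=
  fun a b => Fin.lastCases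
    (Fin.lastCases (1/s) (fun b' => -u b' / s) b)
    (fun a' => Fin.lastCases (-u a' / s) (fun b' => Ai a' b' + u a' * u b' / s) b) a

@[simp] lemma Nmat_cc {i : ℕ} (Ai : Matrix (Fin i) (Fin i) ℝ) (u : Fin i → ℝ) (s : ℝ)
    (a b : Fin i) : Nmat Ai u s a.castSucc b.castSucc = Ai a b + u a * u b / s := by
  simp [Nmat]

@[simp] lemma Nmat_cl {i : ℕ} (Ai : Matrix (Fin i) (Fin i) ℝ) (u : Fin i → ℝ) (s : ℝ)
    (a : Fin i) : Nmat Ai u s a.castSucc (Fin.last i) = -u a / s := by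
  simp [Nmat]

@[simp] lemma Nmat_lc {i : ℕ} (Ai : Matrix (Fin i) (Fin i) ℝ) (u : Fin i → ℝ) (s : ℝ)
    (b : Fin i) : Nmat Ai u s (Fin.last i) b.castSucc = -u b / s := by
  simp [Nmat]

@[simp] lemma Nmat_ll {i : ℕ} (Ai : Matrix (Fin i) (Fin i) ℝ) (u : Fin i → ℝ) (s : ℝ) :
    Nmat Ai u s (Fin.last i) (Fin.last i) = 1/s := by
  simp [Nmat]

section
variable (i : ℕ) (hi : i < n)

-- entry lemmas for the bordered leading matrix
lemma lead_cc (a b : Fin i) :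
    lead R (i+1) hi a.castSucc b.castSucc = lead R i hi.le a b := rfl

lemma lead_cl (a : Fin i) :
    lead R (i+1) hi a.castSucc (Fin.last i) = colv R i hi.le ⟨i, hi⟩ a := rfl

lemma lead_ll : lead R (i+1) hi (Fin.last i) (Fin.last i) = R ⟨i, hi⟩ ⟨i, hi⟩ := rfl

lemma Rsymm (hR : R.PosDef) (a b : Fin n) : R a b = R b a := by
  have := congrFun (congrFun hR.1 b) a
  simpa [conjTranspose_apply] using this

lemma lead_lc (hR : R.PosDef) (b : Fin i) :
    lead R (i+1) hi (Fin.last i) b.castSucc = colv R i hi.le ⟨i, hi⟩ b :=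
  Rsymm hR _ _

end

lemma schur_pos (hR : R.PosDef) (hdiag : ∀ k, R k k = 1) (i : ℕ) (hi : i < n) :
    0 < 1 - colv R i hi.le ⟨i, hi⟩ ⬝ᵥ (lead R i hi.le)⁻¹ *ᵥ colv R i hi.le ⟨i, hi⟩ := by
  set A := lead R i hi.le with hA_def
  set ρ := colv R i hi.le ⟨i, hi⟩ with hρ_def
  set u := A⁻¹ *ᵥ ρ with hu_def
  have hA := lead_posDef hR i hi.le
  have hdet : IsUnit A.det := hA.det_pos.ne'.isUnit
  have hAu : A *ᵥ u = ρ := by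
    rw [hu_def, mulVec_mulVec, mul_nonsing_inv _ hdet, one_mulVec]
  set v : Fin (i+1) → ℝ := Fin.snoc (fun a => -u a) 1 with hv_def
  have hv1 : ∀ b : Fin i, v b.castSucc = -u b := fun b => by
    rw [hv_def]; exact Fin.snoc_castSucc _ _ _
  have hv2 : v (Fin.last i) = 1 := by rw [hv_def]; exact Fin.snoc_last _ _
  have hv : v ≠ 0 := by
    intro h0
    have := congrFun h0 (Fin.last i)
    rw [hv2] at this
    simp at this
  have hq := (lead_posDef hR (i+1) hi).dotProduct_mulVec_pos hv
  have key : dotProduct (star v) ((lead R (i+1) hi) *ᵥ v) = 1 - ρ ⬝ᵥ u := by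
    simp only [star_trivial, dotProduct, mulVec]
    rw [Fin.sum_univ_castSucc]
    have inner1 : ∀ a : Fin i,
        (∑ b : Fin (i+1), lead R (i+1) hi a.castSucc b * v b) = 0 := by
      intro a
      rw [Fin.sum_univ_castSucc]
      have e1 : ∀ b : Fin i,
          lead R (i+1) hi a.castSucc b.castSucc * v b.castSucc
            = -(A a b * u b) := fun b => by
        rw [hv1, lead_cc, hA_def]; ring
      rw [Finset.sum_congr rfl (fun b _ => e1 b), Finset.sum_neg_distrib]
      have e2 := congrFun hAu a
      simp only [mulVec, dotProduct] at e2
      rw [e2, lead_cl, hv2, ← hρ_def]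
      ring
    rw [Finset.sum_congr rfl (fun a _ => by rw [inner1 a, mul_zero]),
      Finset.sum_const_zero, zero_add, hv2, one_mul, Fin.sum_univ_castSucc]
    have e3 : ∀ b : Fin i,
        lead R (i+1) hi (Fin.last i) b.castSucc * v b.castSucc = -(ρ b * u b) := fun b => by
      rw [hv1, lead_lc (hR := hR), ← hρ_def]; ring
    rw [Finset.sum_congr rfl (fun b _ => e3 b), Finset.sum_neg_distrib, lead_ll, hv2,
      hdiag, mul_one]
    show -(∑ b : Fin i, ρ b * u b) + 1 = 1 - ρ ⬝ᵥ u
    simp only [dotProduct]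
    ring_nf
  rw [key] at hq
  exact hq

lemma lead_succ_inv (hR : R.PosDef) (hdiag : ∀ k, R k k = 1) (i : ℕ) (hi : i < n) :
    (lead R (i+1) hi)⁻¹ =
      Nmat (lead R i hi.le)⁻¹ ((lead R i hi.le)⁻¹ *ᵥ colv R i hi.le ⟨i, hi⟩)
        (1 - colv R i hi.le ⟨i, hi⟩ ⬝ᵥ (lead R i hi.le)⁻¹ *ᵥ colv R i hi.le ⟨i, hi⟩) := by
  set A := lead R i hi.le with hA_def
  set ρ := colv R i hi.le ⟨i, hi⟩ with hρ_def
  set u := A⁻¹ *ᵥ ρ with hu_def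
  set s : ℝ := 1 - ρ ⬝ᵥ u with hs_def
  have hA := lead_posDef hR i hi.le
  have hdet : IsUnit A.det := hA.det_pos.ne'.isUnit
  have hAAi : A * A⁻¹ = 1 := mul_nonsing_inv _ hdet
  have hAu : A *ᵥ u = ρ := by
    rw [hu_def, mulVec_mulVec, hAAi, one_mulVec]
  have hs : (0:ℝ) < s := schur_pos hR hdiag i hi
  have hsne : s ≠ 0 := hs.ne'
  have hsymA : Aᵀ = A := by
    ext a b
    exact Rsymm hR _ _
  have hsymAi : (A⁻¹)ᵀ = A⁻¹ := by rw [transpose_nonsing_inv, hsymA]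
  have hρAi : ∀ b, (∑ c : Fin i, ρ c * A⁻¹ c b) = u b := by
    intro b
    have : ∀ c, ρ c * A⁻¹ c b = (A⁻¹)ᵀ b c * ρ c := fun c => by
      rw [transpose_apply]; ring
    rw [Finset.sum_congr rfl fun c _ => this c]
    rw [hsymAi]
    rfl
  have key : lead R (i+1) hi * Nmat A⁻¹ u s = 1 := by
    ext a b
    rw [mul_apply]
    induction a using Fin.lastCases with
    | last =>
      induction b using Fin.lastCases with
      | last =>
        rw [Fin.sum_univ_castSucc]
        have e : ∀ c : Fin i, lead R (i+1) hi (Fin.last i) c.castSucc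
            * Nmat A⁻¹ u s c.castSucc (Fin.last i) = -(ρ c * u c) / s := fun c => by
          rw [lead_lc (hR := hR), Nmat_cl, ← hρ_def]; ring
        rw [Finset.sum_congr rfl fun c _ => e c, lead_ll, Nmat_ll, hdiag]
        rw [show (∑ c : Fin i, -(ρ c * u c) / s) = -(∑ c : Fin i, ρ c * u c) / s by
          rw [← Finset.sum_div, Finset.sum_neg_distrib]]
        have : (∑ c : Fin i, ρ c * u c) = ρ ⬝ᵥ u := rfl
        rw [this, one_apply_eq]
        field_simp [hs_def]
        ring
      | cast b =>
        rw [Fin.sum_univ_castSucc]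
        have e : ∀ c : Fin i, lead R (i+1) hi (Fin.last i) c.castSucc
            * Nmat A⁻¹ u s c.castSucc b.castSucc
            = ρ c * A⁻¹ c b + (ρ c * u c) * (u b / s) := fun c => by
          rw [lead_lc (hR := hR), Nmat_cc, ← hρ_def]; ring
        rw [Finset.sum_congr rfl fun c _ => e c, Finset.sum_add_distrib, ← Finset.sum_mul,
          hρAi, lead_ll, Nmat_lc, hdiag]
        have : (∑ c : Fin i, ρ c * u c) = ρ ⬝ᵥ u := rfl
        rw [this, one_apply_ne (Fin.castSucc_lt_last b).ne']
        have hq : ρ ⬝ᵥ u = 1 - s := by rw [hs_def]; ring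
        rw [hq]
        field_simp
        ring
    | cast a =>
      induction b using Fin.lastCases with
      | last =>
        rw [Fin.sum_univ_castSucc]
        have e : ∀ c : Fin i, lead R (i+1) hi a.castSucc c.castSucc
            * Nmat A⁻¹ u s c.castSucc (Fin.last i) = (A a c * u c) * (-1 / s) := fun c => by
          rw [lead_cc, Nmat_cl, ← hA_def]; ring
        rw [Finset.sum_congr rfl fun c _ => e c, ← Finset.sum_mul]
        have e2 : (∑ c : Fin i, A a c * u c) = ρ a := by
          have := congrFun hAu a
          simpa [mulVec, dotProduct] using this
        rw [e2, lead_cl, Nmat_ll, ← hρ_def, one_apply_ne (Fin.castSucc_lt_last a).ne]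
        field_simp
        ring
      | cast b =>
        rw [Fin.sum_univ_castSucc]
        have e : ∀ c : Fin i, lead R (i+1) hi a.castSucc c.castSucc
            * Nmat A⁻¹ u s c.castSucc b.castSucc
            = A a c * A⁻¹ c b + (A a c * u c) * (u b / s) := fun c => by
          rw [lead_cc, Nmat_cc, ← hA_def]; ring
        rw [Finset.sum_congr rfl fun c _ => e c, Finset.sum_add_distrib, ← Finset.sum_mul]
        have e2 : (∑ c : Fin i, A a c * u c) = ρ a := by
          have := congrFun hAu a
          simpa [mulVec, dotProduct] using this
        have e3 : (∑ c : Fin i, A a c * A⁻¹ c b) = (1 : Matrix (Fin i) (Fin i) ℝ) a b := by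
          rw [← hAAi, mul_apply]
        rw [e2, e3, lead_cl, Nmat_lc, ← hρ_def]
        have : (1 : Matrix (Fin (i+1)) (Fin (i+1)) ℝ) a.castSucc b.castSucc
            = (1 : Matrix (Fin i) (Fin i) ℝ) a b := by
          simp [one_apply, Fin.castSucc_inj]
        rw [this]
        ring
  exact inv_eq_right_inv key


/-- The semi-partial correlation coefficient `ρ_{k+1,j(1,…,k)}` (0-indexed `k`,
0-indexed column `j`):
`(R_{kj} − ρ_k^{*j} R_{k−1}⁻¹ ρ_kᵀ)/√(1 − ρ_k R_{k−1}⁻¹ ρ_kᵀ)`. -/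
noncomputable def spc {n : ℕ} (R : Matrix (Fin n) (Fin n) ℝ) (k : ℕ) (hk : k < n)
    (j : Fin n) : ℝ :=
  (R ⟨k, hk⟩ j - colv R k hk.le j ⬝ᵥ (lead R k hk.le)⁻¹ *ᵥ colv R k hk.le ⟨k, hk⟩) /
    Real.sqrt
      (1 - colv R k hk.le ⟨k, hk⟩ ⬝ᵥ (lead R k hk.le)⁻¹ *ᵥ colv R k hk.le ⟨k, hk⟩)

lemma step (hR : R.PosDef) (hdiag : ∀ k, R k k = 1) (i : ℕ) (hi : i < n) (x y : Fin n) :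
    colv R (i+1) hi x ⬝ᵥ (lead R (i+1) hi)⁻¹ *ᵥ colv R (i+1) hi y
      = colv R i hi.le x ⬝ᵥ (lead R i hi.le)⁻¹ *ᵥ colv R i hi.le y
        + spc R i hi x * spc R i hi y := by
  rw [lead_succ_inv hR hdiag i hi]
  set A := lead R i hi.le with hA_def
  set ρ := colv R i hi.le ⟨i, hi⟩ with hρ_def
  set u := A⁻¹ *ᵥ ρ with hu_def
  set s : ℝ := 1 - ρ ⬝ᵥ u with hs_def
  have hs : (0:ℝ) < s := schur_pos hR hdiag i hi
  have hsne : s ≠ 0 := hs.ne'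
  set X : Fin i → ℝ := colv R i hi.le x with hX_def
  set Y : Fin i → ℝ := colv R i hi.le y with hY_def
  set Rx : ℝ := R ⟨i, hi⟩ x with hRx_def
  set Ry : ℝ := R ⟨i, hi⟩ y with hRy_def
  set cx : ℝ := ∑ a : Fin i, X a * u a with hcx_def
  set cy : ℝ := ∑ b : Fin i, u b * Y b with hcy_def
  have hspc : spc R i hi x * spc R i hi y = (Rx - cx) * (Ry - cy) / s := by
    have hcy' : Y ⬝ᵥ u = cy := Finset.sum_congr rfl fun b _ => mul_comm _ _
    have h1 : spc R i hi x = (Rx - cx) / Real.sqrt s := rfl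
    have h2 : spc R i hi y = (Ry - Y ⬝ᵥ u) / Real.sqrt s := rfl
    rw [h1, h2, hcy', div_mul_div_comm, Real.mul_self_sqrt (le_of_lt hs)]
  rw [hspc]
  -- expand the left-hand side
  have hxc : ∀ a : Fin i, colv R (i+1) hi x a.castSucc = X a := fun a => rfl
  have hxl : colv R (i+1) hi x (Fin.last i) = Rx := rfl
  have hyc : ∀ b : Fin i, colv R (i+1) hi y b.castSucc = Y b := fun b => rfl
  have hyl : colv R (i+1) hi y (Fin.last i) = Ry := rfl
  have inner_c : ∀ a : Fin i,
      (∑ b : Fin (i+1), Nmat A⁻¹ u s a.castSucc b * colv R (i+1) hi y b)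
        = (∑ b : Fin i, A⁻¹ a b * Y b) + u a * (cy / s) + u a * (-Ry / s) := by
    intro a
    rw [Fin.sum_univ_castSucc]
    have e : ∀ b : Fin i, Nmat A⁻¹ u s a.castSucc b.castSucc * colv R (i+1) hi y b.castSucc
        = A⁻¹ a b * Y b + (u b * Y b) * (u a / s) := fun b => by
      rw [Nmat_cc, hyc]; ring
    rw [Finset.sum_congr rfl fun b _ => e b, Finset.sum_add_distrib, ← Finset.sum_mul,
      ← hcy_def, Nmat_cl, hyl]
    ring
  have inner_l : (∑ b : Fin (i+1), Nmat A⁻¹ u s (Fin.last i) b * colv R (i+1) hi y b)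
      = -(cy / s) + Ry / s := by
    rw [Fin.sum_univ_castSucc]
    have e : ∀ b : Fin i, Nmat A⁻¹ u s (Fin.last i) b.castSucc * colv R (i+1) hi y b.castSucc
        = -((u b * Y b) / s) := fun b => by
      rw [Nmat_lc, hyc]; ring
    rw [Finset.sum_congr rfl fun b _ => e b, Finset.sum_neg_distrib, ← Finset.sum_div,
      ← hcy_def, Nmat_ll, hyl]
    ring
  show (∑ a : Fin (i+1), colv R (i+1) hi x a
      * (∑ b : Fin (i+1), Nmat A⁻¹ u s a b * colv R (i+1) hi y b)) = _
  rw [Fin.sum_univ_castSucc]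
  rw [Finset.sum_congr rfl fun a _ => by rw [inner_c a, hxc a], inner_l, hxl]
  have expand : ∀ a : Fin i, X a * ((∑ b : Fin i, A⁻¹ a b * Y b) + u a * (cy / s)
      + u a * (-Ry / s))
      = X a * (∑ b : Fin i, A⁻¹ a b * Y b) + (X a * u a) * (cy / s)
        + (X a * u a) * (-Ry / s) := fun a => by ring
  rw [Finset.sum_congr rfl fun a _ => expand a, Finset.sum_add_distrib,
    Finset.sum_add_distrib, ← Finset.sum_mul, ← Finset.sum_mul, ← hcx_def]
  have base : (∑ a : Fin i, X a * (∑ b : Fin i, A⁻¹ a b * Y b))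
      = X ⬝ᵥ A⁻¹ *ᵥ Y := rfl
  rw [base]
  field_simp
  ring

lemma quad_eq (hR : R.PosDef) (hdiag : ∀ k, R k k = 1) (i : ℕ) (hi : i ≤ n) (x y : Fin n) :
    colv R i hi x ⬝ᵥ (lead R i hi)⁻¹ *ᵥ colv R i hi y
      = ∑ k : Fin i, spc R k (lt_of_lt_of_le k.isLt hi) x
          * spc R k (lt_of_lt_of_le k.isLt hi) y := by
  induction i with
  | zero => simp [dotProduct]
  | succ i ih =>
    have hi' : i < n := hi
    rw [step hR hdiag i hi' x y, ih hi'.le, Fin.sum_univ_castSucc]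
    rfl


/-- Theorem 1 of the paper: `ρ_{i+1}^{*j} R_i⁻¹ ρ_{i+1}ᵀ =
Σ_{k=1}^{i} ρ_{k,i+1(1,…,k−1)} · ρ_{k,j(1,…,k−1)}`.  Here `m` is the paper's `i`
(so `1 ≤ m`), the 0-indexed column `⟨m⟩` is the paper's column `i+1`, and
`j ≥ i + 1` becomes `m ≤ jf`. -/
theorem stmt4 {n : ℕ} (R : Matrix (Fin n) (Fin n) ℝ) (hR : R.PosDef)
    (hdiag : ∀ k, R k k = 1) (m : ℕ) (hm : m < n) (hm1 : 1 ≤ m) (jf : Fin n)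
    (hj : m ≤ (jf : ℕ)) :
    colv R m hm.le jf ⬝ᵥ (lead R m hm.le)⁻¹ *ᵥ colv R m hm.le ⟨m, hm⟩ =
      ∑ k : Fin m, spc R k (k.isLt.trans hm) ⟨m, hm⟩ * spc R k (k.isLt.trans hm) jf := by
  rw [quad_eq hR hdiag m hm.le jf ⟨m, hm⟩]
  exact Finset.sum_congr rfl fun k _ => mul_comm _ _
end
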